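/- Under L-smoothness and additive gradient noise bounded by Δ, the inexact gradient method x_{k+1} = x_k - (1/L) g̃(x_k) satisfies for all N ≥ 1: min_{0 ≤ k ≤ N-1} ‖∇f(x_k)‖ ≤ sqrt(Δ² + 2L(f(x_0) - f*)/N) ≤ Δ + sqrt(2L(f(x_0) - f*)/N). -/

import Mathlib

open scoped RealInnerProductSpace

/-- Descent lemma: for an `L`-smooth function,
`f y ≤ f x + ⟪∇f x, y - x⟫ + L/2 ‖y - x‖²`. -/
lemma descent_lemma {n : ℕ} (f : EuclideanSpace ℝ (Fin n) → ℝ) (L : ℝ) (hL : 0 < L)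
    (hdiff : Differentiable ℝ f)
    (hlip : ∀ x y, ‖gradient f x - gradient f y‖ ≤ L * ‖x - y‖)
    (x y : EuclideanSpace ℝ (Fin n)) :
    f y ≤ f x + ⟪gradient f x, y - x⟫ + L / 2 * ‖y - x‖ ^ 2 := by
  set d := y - x with hd
  set g : ℝ → ℝ := fun t =>
    f (x + t • d) - t * ⟪gradient f x, d⟫ - L * t ^ 2 / 2 * ‖d‖ ^ 2 with hg
  have hderiv : ∀ t : ℝ, HasDerivAt g
      (⟪gradient f (x + t • d), d⟫ - ⟪gradient f x, d⟫ - L * t * ‖d‖ ^ 2) t := by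
    intro t
    have hc : HasDerivAt (fun t : ℝ => x + t • d) d t := by
      simpa using ((hasDerivAt_id t).smul_const d).const_add x
    have hf1 : HasDerivAt (fun t : ℝ => f (x + t • d)) ⟪gradient f (x + t • d), d⟫ t := by
      have := (hdiff (x + t • d)).hasGradientAt.hasFDerivAt.comp_hasDerivAt t hc
      simpa [InnerProductSpace.toDual_apply_apply, Function.comp_def] using this
    have hf2 : HasDerivAt (fun t : ℝ => t * ⟪gradient f x, d⟫) ⟪gradient f x, d⟫ t := by
      simpa using (hasDerivAt_id t).mul_const (⟪gradient f x, d⟫)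
    have hf3 : HasDerivAt (fun t : ℝ => L * t ^ 2 / 2 * ‖d‖ ^ 2) (L * t * ‖d‖ ^ 2) t := by
      have h' : HasDerivAt (fun t : ℝ => t ^ 2) (2 * t) t := by
        simpa using hasDerivAt_pow 2 t
      have := ((h'.const_mul L).div_const 2).mul_const (‖d‖ ^ 2)
      refine this.congr_deriv ?_
      ring
    simpa [hg, Pi.sub_def] using (hf1.sub hf2).sub hf3
  have hanti : AntitoneOn g (Set.Icc (0 : ℝ) 1) := by
    apply antitoneOn_of_deriv_nonpos (convex_Icc 0 1)
    · exact fun t _ => (hderiv t).continuousAt.continuousWithinAt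
    · intro t ht
      exact ((hderiv t).differentiableAt).differentiableWithinAt
    · intro t ht
      rw [interior_Icc] at ht
      rw [(hderiv t).deriv]
      have h1 : ⟪gradient f (x + t • d) - gradient f x, d⟫ ≤ L * t * ‖d‖ ^ 2 := by
        calc ⟪gradient f (x + t • d) - gradient f x, d⟫
            ≤ ‖gradient f (x + t • d) - gradient f x‖ * ‖d‖ := real_inner_le_norm _ _
          _ ≤ (L * ‖(x + t • d) - x‖) * ‖d‖ := by
              apply mul_le_mul_of_nonneg_right (hlip _ _) (norm_nonneg _)
          _ = L * t * ‖d‖ ^ 2 := by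
              rw [show (x + t • d) - x = t • d by abel, norm_smul]
              simp [abs_of_pos ht.1, sq]
              ring
      have h2 : ⟪gradient f (x + t • d) - gradient f x, d⟫
          = ⟪gradient f (x + t • d), d⟫ - ⟪gradient f x, d⟫ := by
        rw [inner_sub_left]
      linarith [h1, h2.symm.le, h2.le]
  have h01 : g 1 ≤ g 0 :=
    hanti (Set.mem_Icc.2 ⟨le_refl 0, zero_le_one⟩) (Set.mem_Icc.2 ⟨zero_le_one, le_refl 1⟩)
      zero_le_one
  simp only [hg, one_smul, zero_smul, add_zero, one_mul, one_pow, zero_pow, mul_zero,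
    zero_mul, sub_zero, mul_one] at h01
  have hxy : x + d = y := by rw [hd]; abel
  rw [hxy] at h01
  have : L * 1 ^ 2 / 2 = L / 2 := by ring
  nlinarith [h01]

/-- Per-step inequality for the inexact gradient step. -/
lemma step_ineq {n : ℕ} (f : EuclideanSpace ℝ (Fin n) → ℝ) (L Δ : ℝ) (hL : 0 < L) (hΔ : 0 ≤ Δ)
    (hdiff : Differentiable ℝ f)
    (hlip : ∀ x y, ‖gradient f x - gradient f y‖ ≤ L * ‖x - y‖)
    (u z : EuclideanSpace ℝ (Fin n)) (herr : ‖gradient f z - u‖ ≤ Δ) :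
    f (z - (1 / L) • u) ≤ f z + Δ ^ 2 / (2 * L) - ‖gradient f z‖ ^ 2 / (2 * L) := by
  have hdesc := descent_lemma f L hL hdiff hlip z (z - (1 / L) • u)
  have hsub : z - (1 / L) • u - z = -((1 / L) • u) := by abel
  rw [hsub] at hdesc
  set gz := gradient f z with hgz
  set v := gz - u with hv
  have hvu : u = gz - v := by rw [hv]; abel
  have hnormv : ‖v‖ ≤ Δ := herr
  have hinner : ⟪gz, -((1 / L) • u)⟫ = -(1 / L) * ⟪gz, u⟫ := by
    rw [inner_neg_right, inner_smul_right]; ring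
  have hnorm : ‖-((1 / L) • u)‖ ^ 2 = (1 / L) ^ 2 * ‖u‖ ^ 2 := by
    rw [norm_neg, norm_smul]
    rw [Real.norm_eq_abs, abs_of_pos (one_div_pos.2 hL)]
    ring
  have hiu : ⟪gz, u⟫ = ‖gz‖ ^ 2 - ⟪gz, v⟫ := by
    rw [hvu, inner_sub_right, real_inner_self_eq_norm_sq]
  have hnu : ‖u‖ ^ 2 = ‖gz‖ ^ 2 - 2 * ⟪gz, v⟫ + ‖v‖ ^ 2 := by
    rw [hvu]
    rw [← real_inner_self_eq_norm_sq, ← real_inner_self_eq_norm_sq, ← real_inner_self_eq_norm_sq]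
    rw [inner_sub_sub_self, real_inner_comm v gz]
    ring
  have hv2 : ‖v‖ ^ 2 ≤ Δ ^ 2 := by
    have := sq_le_sq' (by linarith [norm_nonneg v] : -Δ ≤ ‖v‖) hnormv
    simpa using this
  rw [hinner, hnorm, hiu, hnu] at hdesc
  have hLne : L ≠ 0 := ne_of_gt hL
  have key : f z + -(1 / L) * (‖gz‖ ^ 2 - ⟪gz, v⟫)
      + L / 2 * ((1 / L) ^ 2 * (‖gz‖ ^ 2 - 2 * ⟪gz, v⟫ + ‖v‖ ^ 2))
      = f z + ‖v‖ ^ 2 / (2 * L) - ‖gz‖ ^ 2 / (2 * L) := by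
    field_simp
    ring
  rw [key] at hdesc
  have : ‖v‖ ^ 2 / (2 * L) ≤ Δ ^ 2 / (2 * L) :=
    div_le_div_of_nonneg_right hv2 (by linarith) |>.trans_eq rfl
  linarith

theorem stmt4 {n : ℕ} (f : EuclideanSpace ℝ (Fin n) → ℝ) (L Δ fstar : ℝ)
    (hL : 0 < L) (hΔ : 0 ≤ Δ)
    (hdiff : Differentiable ℝ f)
    (hlip : ∀ x y, ‖gradient f x - gradient f y‖ ≤ L * ‖x - y‖)
    (xstar : EuclideanSpace ℝ (Fin n)) (hfstar : f xstar = fstar)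
    (hmin : ∀ y, fstar ≤ f y)
    (gt : EuclideanSpace ℝ (Fin n) → EuclideanSpace ℝ (Fin n))
    (herr : ∀ z, ‖gradient f z - gt z‖ ≤ Δ)
    (x : ℕ → EuclideanSpace ℝ (Fin n))
    (hstep : ∀ k, x (k + 1) = x k - (1 / L) • gt (x k)) :
    ∀ N : ℕ, 1 ≤ N →
      (∃ k < N, ‖gradient f (x k)‖ ≤
        Real.sqrt (Δ ^ 2 + 2 * L * (f (x 0) - fstar) / N)) ∧
      Real.sqrt (Δ ^ 2 + 2 * L * (f (x 0) - fstar) / N) ≤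
        Δ + Real.sqrt (2 * L * (f (x 0) - fstar) / N) := by
  intro N hN
  have hNpos : (0 : ℝ) < N := by exact_mod_cast hN
  have hstep' : ∀ k, ‖gradient f (x k)‖ ^ 2 ≤ Δ ^ 2 + 2 * L * (f (x k) - f (x (k + 1))) := by
    intro k
    have := step_ineq f L Δ hL hΔ hdiff hlip (gt (x k)) (x k) (herr (x k))
    rw [← hstep k] at this
    have h2L : (0 : ℝ) < 2 * L := by linarith
    have key : ‖gradient f (x k)‖ ^ 2 / (2 * L)
        ≤ (Δ ^ 2 + 2 * L * (f (x k) - f (x (k + 1)))) / (2 * L) := by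
      have e : (Δ ^ 2 + 2 * L * (f (x k) - f (x (k + 1)))) / (2 * L)
          = Δ ^ 2 / (2 * L) + (f (x k) - f (x (k + 1))) := by
        field_simp
      rw [e]; linarith
    exact (div_le_div_iff_of_pos_right h2L).1 key
  -- telescoping sum
  have hsum : ∀ M : ℕ, (∑ k ∈ Finset.range M, ‖gradient f (x k)‖ ^ 2)
      ≤ M * Δ ^ 2 + 2 * L * (f (x 0) - f (x M)) := by
    intro M
    induction M with
    | zero => simp
    | succ M ih =>
        rw [Finset.sum_range_succ]
        have := hstep' M
        push_cast
        linarith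
  have hbound : (∑ k ∈ Finset.range N, ‖gradient f (x k)‖ ^ 2)
      ≤ N * (Δ ^ 2 + 2 * L * (f (x 0) - fstar) / N) := by
    have h1 := hsum N
    have h2 : fstar ≤ f (x N) := hmin _
    have : (N : ℝ) * (Δ ^ 2 + 2 * L * (f (x 0) - fstar) / N)
        = N * Δ ^ 2 + 2 * L * (f (x 0) - fstar) := by
      field_simp
    rw [this]
    nlinarith
  set B := Δ ^ 2 + 2 * L * (f (x 0) - fstar) / N with hB
  have hf0 : fstar ≤ f (x 0) := hmin _
  have hc0 : 0 ≤ 2 * L * (f (x 0) - fstar) / N :=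
    div_nonneg (mul_nonneg (by linarith) (by linarith)) hNpos.le
  have hBnn : 0 ≤ B := by
    rw [hB]
    nlinarith [sq_nonneg Δ]
  have hex : ∃ k ∈ Finset.range N, ‖gradient f (x k)‖ ^ 2 ≤ B := by
    by_contra h
    push_neg at h
    have : (N : ℝ) * B < ∑ k ∈ Finset.range N, ‖gradient f (x k)‖ ^ 2 := by
      have := Finset.sum_lt_sum_of_nonempty
        (Finset.nonempty_range_iff.2 (by omega)) (fun i hi => h i hi)
      simpa [Finset.sum_const, Finset.card_range, nsmul_eq_mul] using this
    linarith
  constructor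
  · obtain ⟨k, hk, hk2⟩ := hex
    refine ⟨k, Finset.mem_range.1 hk, ?_⟩
    have : ‖gradient f (x k)‖ = Real.sqrt (‖gradient f (x k)‖ ^ 2) :=
      (Real.sqrt_sq (norm_nonneg _)).symm
    rw [this]
    exact Real.sqrt_le_sqrt hk2
  · have hc : 0 ≤ 2 * L * (f (x 0) - fstar) / N := hc0
    have h1 : B ≤ (Δ + Real.sqrt (2 * L * (f (x 0) - fstar) / N)) ^ 2 := by
      have hsq : Real.sqrt (2 * L * (f (x 0) - fstar) / N) ^ 2
          = 2 * L * (f (x 0) - fstar) / N := Real.sq_sqrt hc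
      have hs : 0 ≤ Real.sqrt (2 * L * (f (x 0) - fstar) / N) := Real.sqrt_nonneg _
      nlinarith
    calc Real.sqrt B ≤ Real.sqrt ((Δ + Real.sqrt (2 * L * (f (x 0) - fstar) / N)) ^ 2) :=
          Real.sqrt_le_sqrt h1
      _ = Δ + Real.sqrt (2 * L * (f (x 0) - fstar) / N) :=
          Real.sqrt_sq (by linarith [Real.sqrt_nonneg (2 * L * (f (x 0) - fstar) / ↑N)])
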